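/- arXiv:2107.09860 — 2 statements merged into one kernel-verified Lean document; each statement's English description precedes it below -/
import Mathlib

section
/- Let $q \ge 1$, $\delta > 0$, $\varepsilon > 0$, and $t \in (0, \infty)$. Suppose $\eta : [0, \infty) \to \mathbb{R}^n$ is absolutely continuous with $|\eta(t) - \eta(0)| \ge \delta$ and $f(\eta(s)) \ge \varepsilon$ for all $s \in [0,t]$, where $f$ is a given nonnegative function. Then $\int_0^\infty e^{-s}\big(|\dot\eta(s)|^q + f(\eta(s))\big)\,ds \ge \frac{\delta^q}{e^t\, t^{q-1}} + \varepsilon\,(1 - e^{-t})$. -/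
open MeasureTheory Real

lemma jensen_aux (q t : ℝ) (hq : 1 ≤ q) (ht : 0 < t) (g : ℝ → ENNReal)
    (hg : AEMeasurable g (volume.restrict (Set.Ioc 0 t))) :
    ∫⁻ s in Set.Ioc (0:ℝ) t, g s ≤
      (∫⁻ s in Set.Ioc (0:ℝ) t, g s ^ q) ^ (1/q) * ENNReal.ofReal t ^ (1 - 1/q) := by
  rcases eq_or_lt_of_le hq with h1 | h1
  · simp [← h1]
  · have hpq : (Real.conjExponent q).HolderConjugate q :=
      (Real.HolderConjugate.conjExponent h1).symm
    have := ENNReal.lintegral_mul_le_Lp_mul_Lq (volume.restrict (Set.Ioc 0 t)) hpq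
      aemeasurable_const hg (f := fun _ => (1:ENNReal))
    simp only [Pi.mul_apply, one_mul, ENNReal.one_rpow, lintegral_const,
      Measure.restrict_apply, MeasurableSet.univ, Set.univ_inter, Real.volume_Ioc,
      sub_zero] at this
    have he : 1/q.conjExponent = 1 - 1/q := by
      rw [one_div, one_div, ← hpq.symm.one_sub_inv]
    rw [he, mul_comm] at this
    exact this

theorem stmt_5 {n : ℕ} (q δ ε t : ℝ) (hq : 1 ≤ q) (hδ : 0 < δ) (hε : 0 < ε) (ht : 0 < t)
    (η η' : ℝ → EuclideanSpace ℝ (Fin n)) (f : EuclideanSpace ℝ (Fin n) → ℝ)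
    (hf : ∀ x, 0 ≤ f x)
    (hη' : ∀ T > (0 : ℝ), IntegrableOn η' (Set.Icc 0 T))
    (hAC : ∀ x : ℝ, 0 ≤ x → η x = η 0 + ∫ s in (0 : ℝ)..x, η' s)
    (hsep : δ ≤ ‖η t - η 0‖)
    (hfε : ∀ s ∈ Set.Icc (0 : ℝ) t, ε ≤ f (η s)) :
    ENNReal.ofReal (δ ^ q / (Real.exp t * t ^ (q - 1)) + ε * (1 - Real.exp (-t)))
      ≤ ∫⁻ s in Set.Ioi (0 : ℝ),
          ENNReal.ofReal (Real.exp (-s) * (‖η' s‖ ^ q + f (η s))) := by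
  have hq0 : (0:ℝ) < q := lt_of_lt_of_le one_pos hq
  set S := Set.Ioc (0:ℝ) t with hS
  have hη't : IntegrableOn η' (Set.Icc 0 t) := hη' t ht
  have hmeas : AEStronglyMeasurable η' (volume.restrict S) :=
    hη't.aestronglyMeasurable.mono_measure
      (Measure.restrict_mono Set.Ioc_subset_Icc_self le_rfl)
  have hg : AEMeasurable (fun s => ENNReal.ofReal ‖η' s‖) (volume.restrict S) :=
    ENNReal.measurable_ofReal.comp_aemeasurable hmeas.norm.aemeasurable
  -- step 1 : δ ≤ ∫ ‖η'‖
  have hδint : ENNReal.ofReal δ ≤ ∫⁻ s in S, ENNReal.ofReal ‖η' s‖ := by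
    have h1 : η t - η 0 = ∫ s in (0:ℝ)..t, η' s := by rw [hAC t ht.le]; abel
    have h2 : δ ≤ ∫ s in S, ‖η' s‖ := by
      calc δ ≤ ‖η t - η 0‖ := hsep
      _ = ‖∫ s in (0:ℝ)..t, η' s‖ := by rw [h1]
      _ ≤ ∫ s in (0:ℝ)..t, ‖η' s‖ := intervalIntegral.norm_integral_le_integral_norm ht.le
      _ = ∫ s in S, ‖η' s‖ := intervalIntegral.integral_of_le ht.le
    calc ENNReal.ofReal δ ≤ ENNReal.ofReal (∫ s in S, ‖η' s‖) := ENNReal.ofReal_le_ofReal h2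
    _ = ∫⁻ s in S, ENNReal.ofReal ‖η' s‖ :=
        MeasureTheory.ofReal_integral_eq_lintegral_ofReal
          ((hη't.mono_set Set.Ioc_subset_Icc_self).norm)
          (Filter.Eventually.of_forall fun s => norm_nonneg _)
  -- step 2 : Jensen
  set A : ENNReal := ∫⁻ s in S, ENNReal.ofReal (‖η' s‖ ^ q) with hA
  have hAeq : A = ∫⁻ s in S, ENNReal.ofReal ‖η' s‖ ^ q := by
    refine lintegral_congr fun s => ?_
    rw [← ENNReal.ofReal_rpow_of_nonneg (norm_nonneg _) hq0.le]
  have hjen : ENNReal.ofReal δ ≤ A ^ (1/q) * ENNReal.ofReal t ^ (1 - 1/q) := by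
    rw [hAeq]
    exact hδint.trans (jensen_aux q t hq ht _ hg)
  have hkey : ENNReal.ofReal (δ ^ q / t ^ (q - 1)) ≤ A := by
    have hpow : ENNReal.ofReal δ ^ q ≤ A * ENNReal.ofReal t ^ (q - 1) := by
      calc ENNReal.ofReal δ ^ q ≤ (A ^ (1/q) * ENNReal.ofReal t ^ (1 - 1/q)) ^ q :=
        ENNReal.rpow_le_rpow hjen hq0.le
      _ = A ^ (1/q * q) * ENNReal.ofReal t ^ ((1 - 1/q) * q) := by
          rw [ENNReal.mul_rpow_of_nonneg _ _ hq0.le, ← ENNReal.rpow_mul, ← ENNReal.rpow_mul]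
      _ = A * ENNReal.ofReal t ^ (q - 1) := by
          rw [one_div_mul_cancel hq0.ne', ENNReal.rpow_one, sub_mul, one_mul,
            div_mul_cancel₀ _ hq0.ne']
    have ht1 : (0:ℝ) < t ^ (q - 1) := Real.rpow_pos_of_pos ht _
    rw [ENNReal.ofReal_div_of_pos ht1]
    refine ENNReal.div_le_of_le_mul ?_
    rwa [← ENNReal.ofReal_rpow_of_nonneg hδ.le hq0.le,
      ← ENNReal.ofReal_rpow_of_nonneg ht.le (by linarith)]
  -- step 3 : pointwise bound and splitting
  have hmono : ∫⁻ s in S, (ENNReal.ofReal (Real.exp (-t)) * ENNReal.ofReal (‖η' s‖ ^ q)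
        + ENNReal.ofReal (ε * Real.exp (-s)))
      ≤ ∫⁻ s in Set.Ioi (0:ℝ), ENNReal.ofReal (Real.exp (-s) * (‖η' s‖ ^ q + f (η s))) := by
    refine le_trans (setLIntegral_mono' measurableSet_Ioc fun s hs => ?_)
      (lintegral_mono_set Set.Ioc_subset_Ioi_self)
    have h1 : Real.exp (-t) ≤ Real.exp (-s) := Real.exp_le_exp.2 (by linarith [hs.2])
    have h2 : ε ≤ f (η s) := hfε s ⟨hs.1.le, hs.2⟩
    have h3 : (0:ℝ) ≤ ‖η' s‖ ^ q := Real.rpow_nonneg (norm_nonneg _) q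
    rw [← ENNReal.ofReal_mul (Real.exp_nonneg _),
      ← ENNReal.ofReal_add (by positivity) (by positivity)]
    refine ENNReal.ofReal_le_ofReal ?_
    have hs0 : (0:ℝ) < Real.exp (-s) := Real.exp_pos _
    nlinarith [mul_le_mul_of_nonneg_left h2 hs0.le, mul_le_mul_of_nonneg_right h1 h3]
  have hsplit : ∫⁻ s in S, (ENNReal.ofReal (Real.exp (-t)) * ENNReal.ofReal (‖η' s‖ ^ q)
        + ENNReal.ofReal (ε * Real.exp (-s)))
      = ENNReal.ofReal (Real.exp (-t)) * A + ENNReal.ofReal (ε * (1 - Real.exp (-t))) := by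
    have hm : Measurable fun s : ℝ => ENNReal.ofReal (ε * Real.exp (-s)) := by fun_prop
    rw [lintegral_add_right _ hm, lintegral_const_mul' _ _ ENNReal.ofReal_ne_top]
    congr 1
    have hint : IntegrableOn (fun s => ε * Real.exp (-s)) S :=
      (Continuous.mul continuous_const (Real.continuous_exp.comp continuous_neg)).integrableOn_Ioc
    rw [← MeasureTheory.ofReal_integral_eq_lintegral_ofReal hint
      (Filter.Eventually.of_forall fun s => by positivity)]
    congr 1
    rw [← intervalIntegral.integral_of_le ht.le, intervalIntegral.integral_const_mul]
    have : ∫ s in (0:ℝ)..t, Real.exp (-s) = 1 - Real.exp (-t) := by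
      rw [intervalIntegral.integral_comp_neg (fun s => Real.exp s), integral_exp]
      simp
    rw [this]
  -- combine
  have h1et : (0:ℝ) ≤ 1 - Real.exp (-t) := by
    have : Real.exp (-t) ≤ 1 := Real.exp_le_one_iff.2 (by linarith)
    linarith
  rw [ENNReal.ofReal_add (by positivity) (by positivity)]
  refine le_trans (add_le_add ?_ le_rfl) (le_trans hsplit.ge hmono)
  have : δ ^ q / (Real.exp t * t ^ (q - 1)) = Real.exp (-t) * (δ ^ q / t ^ (q - 1)) := by
    rw [Real.exp_neg]; field_simp
  rw [this, ENNReal.ofReal_mul (Real.exp_nonneg _)]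
  exact mul_le_mul_right hkey _
end

section
/- Let $q > 1$ and $y, h \in \mathbb{R}^n$ with $|h| \le |y|$ (and $y \ne 0$). Then $|y + h|^q \le |y|^q + q\,|y|^{q-2}\, (y \cdot h) + C_q\big(|y|^{q-2}|h|^2 + |h|^q\big)$ for a constant $C_q$ depending only on $q$. -/
open Real

lemma aux1 (p x : ℝ) (hp : 1 ≤ p) (hx : 1 ≤ x) : x ^ p ≤ 1 + p * (x - 1) * x ^ (p - 1) := by
  have hx0 : (0:ℝ) < x := lt_of_lt_of_le one_pos hx
  have hs : (-1:ℝ) ≤ 1/x - 1 := by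
    have : 0 < 1/x := by positivity
    linarith
  have hb := one_add_mul_self_le_rpow_one_add hs hp
  have h1 : (1 + (1/x - 1)) = x⁻¹ := by ring
  rw [h1, Real.inv_rpow hx0.le] at hb
  -- hb : 1 + p * (1/x - 1) ≤ (x ^ p)⁻¹
  have hxp : (0:ℝ) < x ^ p := Real.rpow_pos_of_pos hx0 p
  have hxp1 : x ^ p = x ^ (p-1) * x := by
    rw [← Real.rpow_add_one hx0.ne' (p-1)]; ring_nf
  have h2 : (1 + p * (1/x - 1)) * x ^ p ≤ 1 := by
    calc (1 + p * (1/x - 1)) * x ^ p ≤ (x ^ p)⁻¹ * x ^ p :=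
          mul_le_mul_of_nonneg_right hb hxp.le
      _ = 1 := inv_mul_cancel₀ hxp.ne'
  have h3 : (1 + p * (1/x - 1)) * x ^ p
      = x ^ p + p * (x^(p-1) - x ^ p) := by
    field_simp
    nlinarith [hxp1]
  nlinarith [h2, h3, hxp1]

lemma aux2 (p v : ℝ) (hp : 1 ≤ p) (hv0 : 0 < v) (hv1 : v ≤ 1) :
    v ^ p + p * (1 - v) * v ^ (p - 1) ≤ 1 := by
  have hs : (-1:ℝ) ≤ 1/v - 1 := by
    have : 0 < 1/v := by positivity
    linarith
  have hb := one_add_mul_self_le_rpow_one_add hs hp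
  have h1 : (1 + (1/v - 1)) = v⁻¹ := by ring
  rw [h1, Real.inv_rpow hv0.le] at hb
  -- hb : 1 + p * (1/v - 1) ≤ (v ^ p)⁻¹
  have hvp : (0:ℝ) < v ^ p := Real.rpow_pos_of_pos hv0 p
  have hvp1 : v ^ p = v ^ (p-1) * v := by
    rw [← Real.rpow_add_one hv0.ne' (p-1)]; ring_nf
  have h2 : (1 + p * (1/v - 1)) * v ^ p ≤ 1 := by
    calc (1 + p * (1/v - 1)) * v ^ p ≤ (v ^ p)⁻¹ * v ^ p :=
          mul_le_mul_of_nonneg_right hb hvp.le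
      _ = 1 := inv_mul_cancel₀ hvp.ne'
  have h3 : (1 + p * (1/v - 1)) * v ^ p = v ^ p + p * ((v^(p-1)) - v ^ p) := by
    field_simp
    nlinarith [hvp1]
  nlinarith [h2, h3, hvp1]

lemma key (p t : ℝ) (hp : 0 ≤ p) (ht1 : -1 ≤ t) (ht3 : t ≤ 3) :
    (1 + t) ^ p ≤ 1 + p * t + (p ^ 2 * (4:ℝ) ^ p) * t ^ 2 := by
  have h4p1 : (1:ℝ) ≤ (4:ℝ) ^ p := Real.one_le_rpow (by norm_num) hp
  have h4p0 : (0:ℝ) < (4:ℝ) ^ p := Real.rpow_pos_of_pos (by norm_num) p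
  have hCnn : 0 ≤ p ^ 2 * (4:ℝ) ^ p * t ^ 2 := by positivity
  have hB : p ^ 2 * t ^ 2 ≤ p ^ 2 * (4:ℝ) ^ p * t ^ 2 := by
    nlinarith [mul_nonneg (mul_nonneg (sq_nonneg p) (sq_nonneg t)) (by linarith : (0:ℝ) ≤ (4:ℝ)^p - 1)]
  rcases le_or_gt p 1 with hp1 | hp1
  · have hb := rpow_one_add_le_one_add_mul_self ht1 hp hp1
    linarith
  · -- 1 < p
    rcases le_or_gt 0 t with ht0 | ht0
    · -- t ≥ 0
      have hx1 : (1:ℝ) ≤ 1 + t := by linarith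
      have h1 := aux1 p (1+t) hp1.le hx1
      have hp1t : (0:ℝ) ≤ (p-1) * t := by nlinarith
      have h2 : (1+t) ^ (p-1) ≤ 1 + (p-1) * t * (4:ℝ)^p := by
        rcases le_or_gt p 2 with hp2 | hp2
        · have hb := rpow_one_add_le_one_add_mul_self ht1 (by linarith : (0:ℝ) ≤ p - 1)
            (by linarith : p - 1 ≤ 1)
          nlinarith [mul_le_mul_of_nonneg_left h4p1 hp1t]
        · have h3 := aux1 (p-1) (1+t) (by linarith) hx1
          have h4 : (1+t) ^ (p-2) ≤ (4:ℝ) ^ (p-2) := by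
            apply Real.rpow_le_rpow (by linarith) (by linarith) (by linarith)
          have h5 : (4:ℝ) ^ (p-2) ≤ (4:ℝ) ^ p :=
            Real.rpow_le_rpow_of_exponent_le (by norm_num) (by linarith)
          have he : p - 1 - 1 = p - 2 := by ring
          rw [he] at h3
          nlinarith [mul_le_mul_of_nonneg_left (h4.trans h5) hp1t]
      have hpt : 0 ≤ p * t := by positivity
      have hA := mul_le_mul_of_nonneg_left h2 hpt
      have hB2 : p * (p-1) * ((4:ℝ)^p * t^2) ≤ p^2 * ((4:ℝ)^p * t^2) := by
        nlinarith [mul_nonneg h4p0.le (sq_nonneg t)]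
      nlinarith [h1, hA, hB2]
    · -- t < 0
      rcases eq_or_lt_of_le ht1 with he | hlt
      · rw [← he]
        norm_num
        rw [Real.zero_rpow (by linarith : p ≠ 0)]
        nlinarith
      · have hv0 : (0:ℝ) < 1 + t := by linarith
        have hv1 : 1 + t ≤ 1 := by linarith
        have h1 := aux2 p (1+t) hp1.le hv0 hv1
        have h2 : 1 - (1+t) ^ (p-1) ≤ p * (-t) := by
          rcases le_or_gt p 2 with hp2 | hp2
          · have h3 : (1+t) ^ (1:ℝ) ≤ (1+t) ^ (p-1) :=
              Real.rpow_le_rpow_of_exponent_ge hv0 hv1 (by linarith)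
            rw [Real.rpow_one] at h3
            nlinarith
          · have hb := one_add_mul_self_le_rpow_one_add ht1 (by linarith : 1 ≤ p - 1)
            nlinarith
        have hnt : (0:ℝ) ≤ -(p * t) := by nlinarith
        have hC := mul_le_mul_of_nonneg_left h2 hnt
        nlinarith [h1, hC, hB]

set_option maxHeartbeats 1000000 in
theorem stmt_18 (q : ℝ) (hq : 1 < q) :
    ∃ Cq : ℝ, 0 < Cq ∧ ∀ (n : ℕ) (y h : EuclideanSpace ℝ (Fin n)), y ≠ 0 → ‖h‖ ≤ ‖y‖ →
      ‖y + h‖ ^ q ≤ ‖y‖ ^ q + q * ‖y‖ ^ (q - 2) * (inner ℝ y h : ℝ)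
        + Cq * (‖y‖ ^ (q - 2) * ‖h‖ ^ 2 + ‖h‖ ^ q) := by
  set C : ℝ := (q/2) ^ 2 * (4:ℝ) ^ (q/2) with hC
  have hCpos : 0 < C := by positivity
  refine ⟨q/2 + 9 * C + 1, by positivity, ?_⟩
  intro n y h hy hsr
  set r : ℝ := ‖y‖ with hrdef
  set s : ℝ := ‖h‖ with hsdef
  set ip : ℝ := (inner ℝ y h : ℝ) with hipdef
  have hr : 0 < r := norm_pos_iff.mpr hy
  have hs0 : 0 ≤ s := norm_nonneg h
  have hip := abs_real_inner_le_norm y h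
  have hip1 : ip ≤ r * s := (abs_le.mp hip).2
  have hip2 : -(r * s) ≤ ip := (abs_le.mp hip).1
  have hsq : ‖y + h‖ ^ 2 = r ^ 2 + 2 * ip + s ^ 2 := norm_add_sq_real y h
  set t : ℝ := (2 * ip + s ^ 2) / r ^ 2 with htdef
  have hr2 : (0:ℝ) < r ^ 2 := by positivity
  have key0 : r ^ 2 * (1 + t) = ‖y + h‖ ^ 2 := by
    rw [htdef]; field_simp
    linarith [hsq]
  have ht1 : -1 ≤ t := by nlinarith [sq_nonneg ‖y + h‖, key0]
  have ht3 : t ≤ 3 := by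
    rw [htdef, div_le_iff₀ hr2]
    nlinarith
  have hs2 : s ^ 2 ≤ r * s := by nlinarith
  have hrt2 : r ^ 2 * t ^ 2 ≤ 9 * s ^ 2 := by
    have hub : 2 * ip + s ^ 2 ≤ 3 * (r * s) := by linarith
    have hlb : -(3 * (r * s)) ≤ 2 * ip + s ^ 2 := by nlinarith
    have hnum : (2 * ip + s ^ 2) ^ 2 ≤ 9 * (r ^ 2 * s ^ 2) := by nlinarith [hub, hlb]
    have heq : r ^ 2 * t ^ 2 = (2 * ip + s ^ 2) ^ 2 / r ^ 2 := by
      rw [htdef]; field_simp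
    rw [heq, div_le_iff₀ hr2]
    nlinarith
  -- rpow identities
  have hyh0 : (0:ℝ) ≤ ‖y + h‖ := norm_nonneg _
  have h1t0 : (0:ℝ) ≤ 1 + t := by linarith
  have e1 : ‖y + h‖ ^ q = (‖y + h‖ ^ 2) ^ (q/2) := by
    rw [← Real.rpow_natCast ‖y + h‖ 2, ← Real.rpow_mul hyh0,
      show ((2:ℕ):ℝ) * (q/2) = q by push_cast; ring]
  have e2 : (r ^ 2 : ℝ) ^ (q/2) = r ^ q := by
    rw [← Real.rpow_natCast r 2, ← Real.rpow_mul hr.le,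
      show ((2:ℕ):ℝ) * (q/2) = q by push_cast; ring]
  have e3 : ‖y + h‖ ^ q = r ^ q * (1 + t) ^ (q/2) := by
    rw [e1, ← key0, Real.mul_rpow hr2.le h1t0, e2]
  have hrq : (0:ℝ) < r ^ q := Real.rpow_pos_of_pos hr q
  have hrq2 : r ^ q = r ^ (q - 2) * r ^ 2 := by
    rw [← Real.rpow_natCast r 2, ← Real.rpow_add hr]
    norm_num
  have hrq2nn : (0:ℝ) ≤ r ^ (q-2) := Real.rpow_nonneg hr.le _
  have hk := key (q/2) t (by linarith) ht1 ht3
  have hmul := mul_le_mul_of_nonneg_left hk hrq.le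
  rw [← e3] at hmul
  have hB : r ^ q * t = r ^ (q-2) * (2 * ip + s ^ 2) := by
    rw [hrq2, htdef]
    field_simp
  have hC2 : r ^ q * t ^ 2 ≤ 9 * (r ^ (q-2) * s ^ 2) := by
    rw [hrq2]
    calc r ^ (q-2) * r ^ 2 * t ^ 2 = r ^ (q-2) * (r ^ 2 * t ^ 2) := by ring
      _ ≤ r ^ (q-2) * (9 * s ^ 2) := mul_le_mul_of_nonneg_left hrt2 hrq2nn
      _ = 9 * (r ^ (q-2) * s ^ 2) := by ring
  have hsqnn : (0:ℝ) ≤ s ^ q := Real.rpow_nonneg hs0 _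
  have hterm : (0:ℝ) ≤ r ^ (q-2) * s ^ 2 := by positivity
  have hq0 : (0:ℝ) ≤ q := by linarith
  have hstep : ‖y + h‖ ^ q ≤ r ^ q + (q/2) * (r ^ q * t) + C * (r ^ q * t ^ 2) := by
    calc ‖y + h‖ ^ q ≤ r ^ q * (1 + q/2 * t + ((q/2) ^ 2 * (4:ℝ) ^ (q/2)) * t ^ 2) := hmul
      _ = r ^ q + (q/2) * (r ^ q * t) + C * (r ^ q * t ^ 2) := by rw [hC]; ring
  have hCt : C * (r ^ q * t ^ 2) ≤ C * (9 * (r ^ (q-2) * s ^ 2)) :=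
    mul_le_mul_of_nonneg_left hC2 hCpos.le
  rw [hB] at hstep
  nlinarith [hstep, hCt, hterm, hsqnn, mul_nonneg hCpos.le hsqnn, mul_nonneg hq0 hsqnn,
    mul_nonneg hq0 hterm]
end
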